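/- arXiv:2010.10335 — 4 statements merged into one kernel-verified Lean document; each statement's English description precedes it below -/
import Mathlib

section
/- For all natural numbers n, the n-th power of the matrix A·B, where A = [[1,1],[1,2]] and B = [[2,1],[1,1]], equals [[P(2n+1)-P(2n), P(2n)],[2·P(2n), P(2n+1)-P(2n)]], where P denotes the Pell sequence with P(0)=0, P(1)=1, P(n+2)=2·P(n+1)+P(n). -/
def A : Matrix (Fin 2) (Fin 2) ℤ := !![1,1;1,2]
def B : Matrix (Fin 2) (Fin 2) ℤ := !![2,1;1,1]
/-- matrix of a word: `false` is the letter `a`, `true` is the letter `b` -/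
def Mw (w : List Bool) : Matrix (Fin 2) (Fin 2) ℤ :=
  (w.map (fun x => if x then B else A)).prod
/-- the m-value: the top-right entry -/
def mval (w : List Bool) : ℤ := Mw w 0 1
def U : Matrix (Fin 2) (Fin 2) ℤ := !![0,-1;1,0]
def J : Matrix (Fin 2) (Fin 2) ℤ := !![0,1;1,0]
/-- reversal with letters exchanged -/
def Ebar (w : List Bool) : List Bool := (w.map (fun x => !x)).reverse
def pell : ℕ → ℕ
  | 0 => 0
  | 1 => 1
  | n+2 => 2 * pell (n+1) + pell n

theorem stmt1 (n : ℕ) :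
    (A * B) ^ n = !![(pell (2*n+1) : ℤ) - (pell (2*n) : ℤ), (pell (2*n) : ℤ);
                     2 * (pell (2*n) : ℤ), (pell (2*n+1) : ℤ) - (pell (2*n) : ℤ)] := by
  induction n with
  | zero => simp [pow_zero, pell]; ext i j; fin_cases i <;> fin_cases j <;> simp [Matrix.one_apply]
  | succ n ih =>
    have p2 : pell (2*n+2) = 2 * pell (2*n+1) + pell (2*n) := rfl
    have p3 : pell (2*n+2+1) = 2 * (2 * pell (2*n+1) + pell (2*n)) + pell (2*n+1) := by
      show pell (2*n+1+2) = _; rw [pell, p2]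
    rw [pow_succ, ih, show 2*(n+1) = 2*n+2 from by ring, p3, p2, A, B]
    ext i j; fin_cases i <;> fin_cases j <;>
      simp [Matrix.mul_apply, Fin.sum_univ_two] <;> push_cast <;> ring
end

section
/- Let M be the monoid morphism from words over {a,b} to 2×2 integer matrices with M(a)=[[1,1],[1,2]], M(b)=[[2,1],[1,1]], and define the m-value of a word w as the top-right entry of M(w). Then for any word w, the m-value of Ē(w) (the reversal of w with letters a and b exchanged) equals the m-value of w. -/
lemma Mw_append (l₁ l₂ : List Bool) : Mw (l₁ ++ l₂) = Mw l₁ * Mw l₂ := by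
  simp [Mw, List.map_append, List.prod_append]

lemma key (w : List Bool) : Mw (Ebar w) = J * (Mw w).transpose * J := by
  induction w with
  | nil =>
    simp [Ebar, Mw, J]
    decide
  | cons x t ih =>
    have h1 : Ebar (x :: t) = Ebar t ++ [!x] := by simp [Ebar]
    rw [h1, Mw_append, ih]
    have hx : Mw [!x] = J * (Mw [x]).transpose * J := by
      cases x <;> simp [Mw, A, B, J] <;> decide
    have h2 : Mw (x :: t) = Mw [x] * Mw t := by
      have := Mw_append [x] t; simpa using this
    rw [h2, hx]
    have hJJ : (J : Matrix (Fin 2) (Fin 2) ℤ) * J = 1 := by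
      simp [J]; decide
    rw [Matrix.transpose_mul]
    calc J * (Mw t).transpose * J * (J * (Mw [x]).transpose * J)
        = J * (Mw t).transpose * (J * J) * (Mw [x]).transpose * J := by
          noncomm_ring
      _ = J * ((Mw t).transpose * (Mw [x]).transpose) * J := by rw [hJJ]; noncomm_ring

theorem stmt5 (w : List Bool) : mval (Ebar w) = mval w := by
  have h := key w
  have : mval (Ebar w) = (J * (Mw w).transpose * J) 0 1 := by rw [mval, h]
  rw [this]
  simp [J, mval, Matrix.mul_apply, Fin.sum_univ_two, Matrix.transpose_apply, Matrix.vecMul, dotProduct]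
end

section
/- For all natural numbers n, (A·B)^n·A − B·(A·B)^n = P(2n+1)·[[-1,0],[0,1]], where A=[[1,1],[1,2]], B=[[2,1],[1,1]], and P is the Pell sequence. -/
lemma pell_rec (n : ℕ) : pell (n+2) = 2 * pell (n+1) + pell n := rfl

lemma hAB : A * B = !![3,2;4,3] := by
  rw [A, B, show (!![1,1;1,2] : Matrix (Fin 2) (Fin 2) ℤ) * !![2,1;1,1]
    = !![1*2+1*1, 1*1+1*1; 1*2+2*1, 1*1+2*1] from by
      ext i j; fin_cases i <;> fin_cases j <;>
        simp [Matrix.mul_apply, Fin.sum_univ_two]]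
  norm_num

lemma pow_form (n : ℕ) : (A * B) ^ n =
    !![(pell (2*n+1) : ℤ) - pell (2*n), (pell (2*n) : ℤ);
       2 * (pell (2*n) : ℤ), (pell (2*n+1) : ℤ) - pell (2*n)] := by
  induction n with
  | zero => simp [pell, Matrix.one_fin_two]
  | succ n ih =>
    rw [pow_succ, ih, hAB]
    have a1 : 2*(n+1) = 2*n+2 := by ring
    rw [a1]
    have e1 : pell (2*n+2) = 2 * pell (2*n+1) + pell (2*n) := pell_rec (2*n)
    have e2 : pell (2*n+2+1) = 2 * pell (2*n+2) + pell (2*n+1) := by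
      have h := pell_rec (2*n+1)
      simpa [show 2*n+1+2 = 2*n+2+1 from by ring,
             show 2*n+1+1 = 2*n+2 from by ring] using h
    ext i j
    fin_cases i <;> fin_cases j <;>
      simp [Matrix.mul_apply, Fin.sum_univ_two, e1, e2] <;> push_cast <;> ring

theorem stmt9 (n : ℕ) :
    (A * B) ^ n * A - B * (A * B) ^ n = (pell (2*n+1) : ℤ) • !![-1,0;0,1] := by
  rw [pow_form, A, B]
  ext i j
  fin_cases i <;> fin_cases j <;>
    simp [Matrix.mul_apply, Fin.sum_univ_two] <;> ring
end

section
/- For every natural number p: the m-value of the word a^p equals F(2p), and the m-value of a^p·b equals F(2p+1), where F is the Fibonacci sequence. -/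
lemma Mw_rep (p : ℕ) :
    Mw (List.replicate p false) =
      !![(Nat.fib (2*p+1) : ℤ) - Nat.fib (2*p), (Nat.fib (2*p) : ℤ);
         (Nat.fib (2*p) : ℤ), (Nat.fib (2*p+1) : ℤ)] := by
  induction p with
  | zero => simp [Mw, Matrix.one_fin_two]
  | succ p ih =>
    have : List.replicate (p+1) false = false :: List.replicate p false := rfl
    rw [this]
    have h1 : Mw (false :: List.replicate p false) = A * Mw (List.replicate p false) := by
      simp [Mw]
    rw [h1, ih]
    have e1 : 2*(p+1)+1 = (2*p+1)+2 := by ring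
    have e2 : 2*(p+1) = (2*p)+2 := by ring
    rw [e1, e2, Nat.fib_add_two, Nat.fib_add_two]
    ext i j
    fin_cases i <;> fin_cases j <;>
      simp [A, Matrix.mul_apply, Fin.sum_univ_two] <;> push_cast <;> ring

theorem stmt15 (p : ℕ) :
    mval (List.replicate p false) = (Nat.fib (2*p) : ℤ) ∧
    mval (List.replicate p false ++ [true]) = (Nat.fib (2*p+1) : ℤ) := by
  constructor
  · simp [mval, Mw_rep]
  · have : Mw (List.replicate p false ++ [true]) = Mw (List.replicate p false) * B := by
      simp [Mw]
    simp only [mval, this, Mw_rep]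
    simp [B, Matrix.mul_apply, Fin.sum_univ_two]
end
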